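/- Data processing for V_2 on the B side: if A, B, C are finite sets, p_{AB} is a joint distribution, and C is obtained from B by a channel w(c|b) (so p(a,c) = Σ_b p(a,b)w(c|b)), then V_2(A;C) ≤ V_2(A;B). -/

import Mathlib

open Finset

/-- Data processing for `V_2` on the `B` side: if `C` is obtained from `B` by a channel
`w(c|b)`, i.e. `p(a,c) = Σ_b p(a,b) w(c|b)`, then `V_2(A;C) ≤ V_2(A;B)`. -/
theorem stmt_6 {A B C : Type*} [Fintype A] [Fintype B] [Fintype C]
    (p : A → B → ℝ) (hp : ∀ a b, 0 ≤ p a b)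
    (hsum : ∑ a, ∑ b, p a b = 1)
    (w : B → C → ℝ) (hw : ∀ b c, 0 ≤ w b c) (hw1 : ∀ b, ∑ c, w b c = 1) :
    (∑ c, (∑ a, (∑ c', ∑ b, p a b * w b c') *
        ((∑ b, p a b * w b c) / (∑ c', ∑ b, p a b * w b c') -
          ∑ a', ∑ b, p a' b * w b c) ^ 2) ^ ((1:ℝ)/2)) ≤
      ∑ b, (∑ a, (∑ b', p a b') *
        (p a b / (∑ b', p a b') - ∑ a', p a' b) ^ 2) ^ ((1:ℝ)/2) := by
  classical
  set pA : A → ℝ := fun a => ∑ b, p a b with hpAdef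
  have hpA0 : ∀ a, 0 ≤ pA a := fun a => Finset.sum_nonneg fun b _ => hp a b
  have hmarg : ∀ a, (∑ c', ∑ b, p a b * w b c') = pA a := by
    intro a
    rw [Finset.sum_comm]
    simp [← Finset.mul_sum, hw1]
    rfl
  set F : B → EuclideanSpace ℝ A :=
    fun b => WithLp.toLp 2 fun a => Real.sqrt (pA a) * (p a b / pA a - ∑ a', p a' b) with hFdef
  have hnormF : ∀ b, ‖F b‖ =
      (∑ a, pA a * (p a b / pA a - ∑ a', p a' b) ^ 2) ^ ((1:ℝ)/2) := by
    intro b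
    rw [EuclideanSpace.norm_eq, ← Real.sqrt_eq_rpow]
    congr 1
    refine Finset.sum_congr rfl fun a _ => ?_
    rw [hFdef]
    simp only [WithLp.ofLp_toLp]
    rw [Real.norm_eq_abs, sq_abs, mul_pow, Real.sq_sqrt (hpA0 a)]
  have key1 : ∀ c, (∑ a, (∑ c', ∑ b, p a b * w b c') *
        ((∑ b, p a b * w b c) / (∑ c', ∑ b, p a b * w b c') -
          ∑ a', ∑ b, p a' b * w b c) ^ 2) ^ ((1:ℝ)/2) = ‖∑ b, w b c • F b‖ := by
    intro c
    rw [EuclideanSpace.norm_eq, ← Real.sqrt_eq_rpow]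
    congr 1
    refine Finset.sum_congr rfl fun a _ => ?_
    have happ : (∑ b, w b c • F b) a = ∑ b, w b c * F b a := by
      rw [WithLp.ofLp_sum, Finset.sum_apply]
      exact Finset.sum_congr rfl fun b _ => rfl
    rw [Real.norm_eq_abs, sq_abs, happ, hmarg a]
    have hswap : ∑ a', ∑ b, p a' b * w b c = ∑ b, w b c * ∑ a', p a' b := by
      rw [Finset.sum_comm]
      refine Finset.sum_congr rfl fun b _ => ?_
      rw [Finset.mul_sum]
      exact Finset.sum_congr rfl fun a' _ => mul_comm _ _
    have hdiv : (∑ b, p a b * w b c) / pA a = ∑ b, w b c * (p a b / pA a) := by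
      rw [Finset.sum_div]
      exact Finset.sum_congr rfl fun b _ => by ring
    have h1 : ∑ b, w b c * F b a
        = Real.sqrt (pA a) * ((∑ b, p a b * w b c) / pA a - ∑ a', ∑ b, p a' b * w b c) := by
      rw [hswap, hdiv, hFdef]
      simp only [WithLp.ofLp_toLp]
      rw [← Finset.sum_sub_distrib, Finset.mul_sum]
      exact Finset.sum_congr rfl fun b _ => by ring
    rw [h1, mul_pow, Real.sq_sqrt (hpA0 a)]
  calc (∑ c, (∑ a, (∑ c', ∑ b, p a b * w b c') *
        ((∑ b, p a b * w b c) / (∑ c', ∑ b, p a b * w b c') -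
          ∑ a', ∑ b, p a' b * w b c) ^ 2) ^ ((1:ℝ)/2))
      = ∑ c, ‖∑ b, w b c • F b‖ := by
        exact Finset.sum_congr rfl fun c _ => key1 c
    _ ≤ ∑ c, ∑ b, ‖w b c • F b‖ :=
        Finset.sum_le_sum fun c _ => norm_sum_le _ _
    _ = ∑ c, ∑ b, w b c * ‖F b‖ := by
        refine Finset.sum_congr rfl fun c _ => Finset.sum_congr rfl fun b _ => ?_
        rw [norm_smul, Real.norm_eq_abs, abs_of_nonneg (hw b c)]
    _ = ∑ b, (∑ c, w b c) * ‖F b‖ := by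
        rw [Finset.sum_comm]
        refine Finset.sum_congr rfl fun b _ => ?_
        rw [Finset.sum_mul]
    _ = ∑ b, ‖F b‖ := by
        refine Finset.sum_congr rfl fun b _ => ?_
        rw [hw1 b, one_mul]
    _ = ∑ b, (∑ a, (∑ b', p a b') *
        (p a b / (∑ b', p a b') - ∑ a', p a' b) ^ 2) ^ ((1:ℝ)/2) :=
        Finset.sum_congr rfl fun b _ => hnormF b
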